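/- arXiv:1711.07199 — 5 statements merged into one kernel-verified Lean document; each statement's English description precedes it below -/
import Mathlib

section
/- Let Y_1, …, Y_n ∈ R^d and β > 1. Define M_n(t) = (1/n) Σ_{j=1}^n exp(t·Y_j) and m(t) = exp(‖t‖²/2). Then n ∫_{R^d} (M_n(t) - m(t))² exp(-β‖t‖²) dt = π^{d/2} [ (1/n) Σ_{i,j=1}^n β^{-d/2} exp(‖Y_i+Y_j‖²/(4β)) + n (β-1)^{-d/2} - 2 Σ_{j=1}^n (β - 1/2)^{-d/2} exp(‖Y_j‖²/(4β-2)) ]. -/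
open MeasureTheory Real
open scoped RealInnerProductSpace BigOperators

open Complex in
lemma gauss_int {d : ℕ} {b : ℝ} (hb : 0 < b) (w : EuclideanSpace ℝ (Fin d)) :
    ∫ v : EuclideanSpace ℝ (Fin d), rexp (-b * ‖v‖ ^ 2 + ⟪w, v⟫)
      = (π / b) ^ ((d : ℝ) / 2) * rexp (‖w‖ ^ 2 / (4 * b)) := by
  rw [← Complex.ofReal_inj]
  have h := GaussianFourier.integral_cexp_neg_mul_sq_norm_add (V := EuclideanSpace ℝ (Fin d))
      (b := (b : ℂ)) (by simpa using hb) 1 w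
  simp only [one_mul, one_pow] at h
  have heq : ∫ v : EuclideanSpace ℝ (Fin d), cexp (-(b : ℂ) * ‖v‖ ^ 2 + (⟪w, v⟫ : ℝ))
      = ((∫ v : EuclideanSpace ℝ (Fin d), rexp (-b * ‖v‖ ^ 2 + ⟪w, v⟫) : ℝ) : ℂ) := by
    rw [show ((∫ v : EuclideanSpace ℝ (Fin d), rexp (-b * ‖v‖ ^ 2 + ⟪w, v⟫) : ℝ) : ℂ)
        = Complex.ofRealLI (∫ v : EuclideanSpace ℝ (Fin d), rexp (-b * ‖v‖ ^ 2 + ⟪w, v⟫)) from rfl]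
    rw [← Complex.ofRealLI.integral_comp_comm]
    congr 1 with v
    rw [show -(b : ℂ) * (‖v‖ : ℂ) ^ 2 + ((⟪w, v⟫ : ℝ) : ℂ) = ((-b * ‖v‖ ^ 2 + ⟪w, v⟫ : ℝ) : ℂ) by
      push_cast; ring]
    rw [← Complex.ofReal_exp]
    rfl
  rw [heq] at h
  rw [h]
  have hfr : (Module.finrank ℝ (EuclideanSpace ℝ (Fin d)) : ℂ) / 2 = ((d : ℝ) / 2 : ℝ) := by
    simp
  rw [hfr]
  rw [show ((π : ℂ) / b) = ((π / b : ℝ) : ℂ) by push_cast; ring,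
    ← Complex.ofReal_cpow (by positivity)]
  rw [show ((‖w‖ : ℂ) ^ 2 / (4 * (b : ℂ))) = ((‖w‖ ^ 2 / (4 * b) : ℝ) : ℂ) by push_cast; ring,
    ← Complex.ofReal_exp, ← Complex.ofReal_mul]

open Complex in
lemma gauss_integrable {d : ℕ} {b : ℝ} (hb : 0 < b) (w : EuclideanSpace ℝ (Fin d)) :
    Integrable (fun v : EuclideanSpace ℝ (Fin d) => rexp (-b * ‖v‖ ^ 2 + ⟪w, v⟫)) := by
  have h := GaussianFourier.integrable_cexp_neg_mul_sq_norm_add (V := EuclideanSpace ℝ (Fin d))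
      (b := (b : ℂ)) (by simpa using hb) 1 w
  apply h.re.congr
  filter_upwards with v
  have key : ∀ z : ℝ, (cexp ((z : ℝ) : ℂ)).re = rexp z := fun z => by
    rw [← Complex.ofReal_exp, Complex.ofReal_re]
  rw [show -(b : ℂ) * (‖v‖ : ℂ) ^ 2 + 1 * ((⟪w, v⟫ : ℝ) : ℂ)
      = ((-b * ‖v‖ ^ 2 + ⟪w, v⟫ : ℝ) : ℂ) by push_cast; ring]
  exact key _

open Complex in
theorem Tnbeta_closed_form (d n : ℕ) (hn : 0 < n) (Y : Fin n → EuclideanSpace ℝ (Fin d))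
    (β : ℝ) (hβ : 1 < β) :
    (n : ℝ) * ∫ t : EuclideanSpace ℝ (Fin d),
        ((1 / (n : ℝ)) * ∑ j, Real.exp ⟪t, Y j⟫ - Real.exp (‖t‖ ^ 2 / 2)) ^ 2
          * Real.exp (-β * ‖t‖ ^ 2)
      = Real.pi ^ ((d : ℝ) / 2) *
          ((1 / (n : ℝ)) * ∑ i, ∑ j,
              (1 / β ^ ((d : ℝ) / 2)) * Real.exp (‖Y i + Y j‖ ^ 2 / (4 * β))
            + (n : ℝ) / (β - 1) ^ ((d : ℝ) / 2)
            - 2 * ∑ j, (1 / (β - 1 / 2) ^ ((d : ℝ) / 2))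
                * Real.exp (‖Y j‖ ^ 2 / (4 * β - 2))) := by
  have hβ0 : (0:ℝ) < β := by linarith
  have hβ2 : (0:ℝ) < β - 1/2 := by linarith
  have hβ1 : (0:ℝ) < β - 1 := by linarith
  have hn0 : (n:ℝ) ≠ 0 := Nat.cast_ne_zero.mpr hn.ne'
  -- pointwise identity
  have hpt : ∀ t : EuclideanSpace ℝ (Fin d),
      ((1 / (n : ℝ)) * ∑ j, Real.exp ⟪t, Y j⟫ - Real.exp (‖t‖ ^ 2 / 2)) ^ 2
          * Real.exp (-β * ‖t‖ ^ 2)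
      = (1 / (n:ℝ))^2 * ∑ i, ∑ j, rexp (-β * ‖t‖^2 + ⟪Y i + Y j, t⟫)
        - (2 / (n:ℝ)) * ∑ j, rexp (-(β - 1/2) * ‖t‖^2 + ⟪Y j, t⟫)
        + rexp (-(β - 1) * ‖t‖^2 + ⟪(0 : EuclideanSpace ℝ (Fin d)), t⟫) := by
    intro t
    have h1 : ∑ i, ∑ j, rexp (-β * ‖t‖^2 + ⟪Y i + Y j, t⟫)
        = (∑ j, rexp ⟪t, Y j⟫) * (∑ j, rexp ⟪t, Y j⟫) * rexp (-β * ‖t‖^2) := by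
      rw [Finset.sum_mul_sum, Finset.sum_mul]
      refine Finset.sum_congr rfl fun i _ => ?_
      rw [Finset.sum_mul]
      refine Finset.sum_congr rfl fun j _ => ?_
      rw [inner_add_left, real_inner_comm (Y i) t, real_inner_comm (Y j) t,
        ← Real.exp_add, ← Real.exp_add]
      ring_nf
    have h2 : ∑ j, rexp (-(β - 1/2) * ‖t‖^2 + ⟪Y j, t⟫)
        = (∑ j, rexp ⟪t, Y j⟫) * (rexp (‖t‖^2/2) * rexp (-β * ‖t‖^2)) := by
      rw [Finset.sum_mul]
      refine Finset.sum_congr rfl fun j _ => ?_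
      rw [real_inner_comm (Y j) t, ← Real.exp_add, ← Real.exp_add]
      ring_nf
    have h3 : rexp (-(β - 1) * ‖t‖^2 + ⟪(0 : EuclideanSpace ℝ (Fin d)), t⟫)
        = rexp (‖t‖^2/2) * rexp (‖t‖^2/2) * rexp (-β * ‖t‖^2) := by
      rw [inner_zero_left, ← Real.exp_add, ← Real.exp_add]
      ring_nf
    rw [h1, h2, h3]
    ring
  simp only [hpt]
  -- integrability
  have I1 : Integrable (fun t : EuclideanSpace ℝ (Fin d) =>
      ∑ i, ∑ j, rexp (-β * ‖t‖^2 + ⟪Y i + Y j, t⟫)) :=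
    integrable_finset_sum _ fun i _ =>
      integrable_finset_sum _ fun j _ => gauss_integrable hβ0 (Y i + Y j)
  have I2 : Integrable (fun t : EuclideanSpace ℝ (Fin d) =>
      ∑ j, rexp (-(β - 1/2) * ‖t‖^2 + ⟪Y j, t⟫)) :=
    integrable_finset_sum _ fun j _ => gauss_integrable hβ2 (Y j)
  have I3 : Integrable (fun t : EuclideanSpace ℝ (Fin d) =>
      rexp (-(β - 1) * ‖t‖^2 + ⟪(0 : EuclideanSpace ℝ (Fin d)), t⟫)) :=
    gauss_integrable hβ1 0
  have IA : Integrable (fun t : EuclideanSpace ℝ (Fin d) =>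
      (1 / (n:ℝ))^2 * ∑ i, ∑ j, rexp (-β * ‖t‖^2 + ⟪Y i + Y j, t⟫)
        - (2 / (n:ℝ)) * ∑ j, rexp (-(β - 1/2) * ‖t‖^2 + ⟪Y j, t⟫)) :=
    (I1.const_mul _).sub (I2.const_mul _)
  have IB : Integrable (fun t : EuclideanSpace ℝ (Fin d) =>
      (1 / (n:ℝ))^2 * ∑ i, ∑ j, rexp (-β * ‖t‖^2 + ⟪Y i + Y j, t⟫)) := I1.const_mul _
  have IC : Integrable (fun t : EuclideanSpace ℝ (Fin d) =>
      (2 / (n:ℝ)) * ∑ j, rexp (-(β - 1/2) * ‖t‖^2 + ⟪Y j, t⟫)) := I2.const_mul _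
  rw [integral_add IA I3, integral_sub IB IC,
    integral_const_mul, integral_const_mul, integral_finset_sum _ (fun i _ =>
      integrable_finset_sum _ fun j _ => gauss_integrable hβ0 (Y i + Y j)),
    integral_finset_sum _ (fun j _ => gauss_integrable hβ2 (Y j))]
  have hInner : ∀ i : Fin n,
      ∫ a : EuclideanSpace ℝ (Fin d), ∑ j, rexp (-β * ‖a‖^2 + ⟪Y i + Y j, a⟫)
        = ∑ j, (π / β) ^ ((d:ℝ)/2) * rexp (‖Y i + Y j‖^2 / (4*β)) := fun i => by
    rw [integral_finset_sum _ (fun j _ => gauss_integrable hβ0 (Y i + Y j))]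
    exact Finset.sum_congr rfl fun j _ => gauss_int hβ0 _
  simp only [hInner]
  simp only [gauss_int hβ2, gauss_int hβ1]
  rw [norm_zero]
  have hS1 : ∀ i : Fin n, ∑ j, (π / β) ^ ((d:ℝ)/2) * rexp (‖Y i + Y j‖^2 / (4*β))
      = π ^ ((d:ℝ)/2) * ∑ j, (1 / β ^ ((d:ℝ)/2)) * rexp (‖Y i + Y j‖^2 / (4*β)) := by
    intro i
    rw [Finset.mul_sum]
    refine Finset.sum_congr rfl fun j _ => ?_
    rw [Real.div_rpow pi_pos.le hβ0.le]
    ring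
  have hS2 : ∑ j, (π / (β - 1/2)) ^ ((d:ℝ)/2) * rexp (‖Y j‖^2 / (4*(β - 1/2)))
      = π ^ ((d:ℝ)/2) * ∑ j, (1 / (β - 1/2) ^ ((d:ℝ)/2)) * rexp (‖Y j‖^2 / (4*β - 2)) := by
    rw [Finset.mul_sum]
    refine Finset.sum_congr rfl fun j _ => ?_
    rw [Real.div_rpow pi_pos.le hβ2.le, show 4*(β - 1/2) = 4*β - 2 by ring]
    ring
  simp only [hS1]
  rw [hS2, ← Finset.mul_sum, Real.div_rpow pi_pos.le hβ1.le]
  rw [show (0:ℝ)^2 / (4*(β-1)) = 0 by simp, Real.exp_zero]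
  have hb1 : (β-1) ^ ((d:ℝ)/2) ≠ 0 := (Real.rpow_pos_of_pos hβ1 _).ne'
  field_simp
  ring
end

section
/- Let Y_1, …, Y_n ∈ R^d satisfy Σ_j Y_j = 0 and Σ_j Y_j Y_jᵀ = n·I_d. Then Σ_{j,k=1}^n ‖Y_j + Y_k‖⁴ (Y_jᵀY_k) = 8n² b_{2,d} + 4n² b_{1,d} + 2n² b̃_{1,d}, where b_{2,d} = n^{-1} Σ_j ‖Y_j‖⁴, b_{1,d} = n^{-2} Σ_{j,k} (Y_jᵀY_k)³, and b̃_{1,d} = n^{-2} Σ_{j,k} (Y_jᵀY_k)‖Y_j‖²‖Y_k‖². -/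
open scoped RealInnerProductSpace BigOperators

theorem standardized_fourth_power_inner_sum (d n : ℕ) (hn : 0 < n)
    (Y : Fin n → EuclideanSpace ℝ (Fin d))
    (hmean : ∑ j, Y j = 0)
    (hcov : ∀ k l : Fin d, ∑ j, Y j k * Y j l = if k = l then (n : ℝ) else 0) :
    ∑ j, ∑ k, ‖Y j + Y k‖ ^ 4 * ⟪Y j, Y k⟫
      = 8 * (n : ℝ) ^ 2 * ((1 / (n : ℝ)) * ∑ j, ‖Y j‖ ^ 4)
        + 4 * (n : ℝ) ^ 2 * ((1 / (n : ℝ) ^ 2) * ∑ j, ∑ k, ⟪Y j, Y k⟫ ^ 3)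
        + 2 * (n : ℝ) ^ 2 *
            ((1 / (n : ℝ) ^ 2) * ∑ j, ∑ k, ⟪Y j, Y k⟫ * ‖Y j‖ ^ 2 * ‖Y k‖ ^ 2) := by
  have hn' : (n : ℝ) ≠ 0 := Nat.cast_ne_zero.mpr hn.ne'
  have h0 : ∀ j : Fin n, ∑ k, ⟪Y j, Y k⟫ = 0 := by
    intro j
    rw [← inner_sum, hmean, inner_zero_right]
  have h0' : ∀ k : Fin n, ∑ j, ⟪Y j, Y k⟫ = 0 := by
    intro k
    rw [← sum_inner, hmean, inner_zero_left]
  have hinner : ∀ j k : Fin n, ⟪Y j, Y k⟫ = ∑ a, Y j a * Y k a := by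
    intro j k
    simp [PiLp.inner_apply, RCLike.inner_apply, conj_trivial, mul_comm]
  have hnormsq : ∀ j : Fin n, ‖Y j‖ ^ 2 = ∑ a, Y j a * Y j a := by
    intro j
    rw [← real_inner_self_eq_norm_sq, hinner]
  have h2 : ∀ j : Fin n, ∑ k, ⟪Y j, Y k⟫ ^ 2 = (n : ℝ) * ‖Y j‖ ^ 2 := by
    intro j
    calc ∑ k, ⟪Y j, Y k⟫ ^ 2
        = ∑ k, ∑ a, ∑ b, (Y j a * Y j b) * (Y k a * Y k b) := by
          refine Finset.sum_congr rfl fun k _ => ?_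
          rw [hinner, sq, Finset.sum_mul_sum]
          exact Finset.sum_congr rfl fun a _ => Finset.sum_congr rfl fun b _ => by ring
      _ = ∑ a, ∑ b, (Y j a * Y j b) * ∑ k, (Y k a * Y k b) := by
          rw [Finset.sum_comm]
          refine Finset.sum_congr rfl fun a _ => ?_
          rw [Finset.sum_comm]
          exact Finset.sum_congr rfl fun b _ => (Finset.mul_sum _ _ _).symm
      _ = ∑ a, (Y j a * Y j a) * (n : ℝ) := by
          refine Finset.sum_congr rfl fun a _ => ?_
          simp only [hcov, mul_ite, mul_zero]
          simp
      _ = (n : ℝ) * ‖Y j‖ ^ 2 := by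
          rw [hnormsq, ← Finset.sum_mul, mul_comm]
  have h2' : ∀ k : Fin n, ∑ j, ⟪Y j, Y k⟫ ^ 2 = (n : ℝ) * ‖Y k‖ ^ 2 := by
    intro k
    rw [← h2 k]
    exact Finset.sum_congr rfl fun j _ => by rw [real_inner_comm]
  have hexp : ∀ j k : Fin n, ‖Y j + Y k‖ ^ 4 * ⟪Y j, Y k⟫ =
      ‖Y j‖ ^ 4 * ⟪Y j, Y k⟫ + ‖Y k‖ ^ 4 * ⟪Y j, Y k⟫ + 4 * ⟪Y j, Y k⟫ ^ 3
        + 2 * (⟪Y j, Y k⟫ * ‖Y j‖ ^ 2 * ‖Y k‖ ^ 2)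
        + 4 * (‖Y j‖ ^ 2 * ⟪Y j, Y k⟫ ^ 2) + 4 * (‖Y k‖ ^ 2 * ⟪Y j, Y k⟫ ^ 2) := by
    intro j k
    have h4 : ‖Y j + Y k‖ ^ 4 = (‖Y j + Y k‖ ^ 2) ^ 2 := by ring
    rw [h4, norm_add_sq_real]
    ring
  have hsplit : ∑ j, ∑ k, ‖Y j + Y k‖ ^ 4 * ⟪Y j, Y k⟫
      = (∑ j, ∑ k, ‖Y j‖ ^ 4 * ⟪Y j, Y k⟫)
        + (∑ j, ∑ k, ‖Y k‖ ^ 4 * ⟪Y j, Y k⟫)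
        + 4 * (∑ j, ∑ k, ⟪Y j, Y k⟫ ^ 3)
        + 2 * (∑ j, ∑ k, ⟪Y j, Y k⟫ * ‖Y j‖ ^ 2 * ‖Y k‖ ^ 2)
        + 4 * (∑ j, ∑ k, ‖Y j‖ ^ 2 * ⟪Y j, Y k⟫ ^ 2)
        + 4 * (∑ j, ∑ k, ‖Y k‖ ^ 2 * ⟪Y j, Y k⟫ ^ 2) := by
    simp only [hexp, Finset.sum_add_distrib, Finset.mul_sum]
  have hT1 : (∑ j, ∑ k : Fin n, ‖Y j‖ ^ 4 * ⟪Y j, Y k⟫) = 0 := by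
    refine Finset.sum_eq_zero fun j _ => ?_
    rw [← Finset.mul_sum, h0 j, mul_zero]
  have hT2 : (∑ j, ∑ k : Fin n, ‖Y k‖ ^ 4 * ⟪Y j, Y k⟫) = 0 := by
    rw [Finset.sum_comm]
    refine Finset.sum_eq_zero fun k _ => ?_
    rw [← Finset.mul_sum, h0' k, mul_zero]
  have hT5 : (∑ j, ∑ k : Fin n, ‖Y j‖ ^ 2 * ⟪Y j, Y k⟫ ^ 2) = (n : ℝ) * ∑ j, ‖Y j‖ ^ 4 := by
    rw [Finset.mul_sum]
    refine Finset.sum_congr rfl fun j _ => ?_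
    rw [← Finset.mul_sum, h2 j]
    ring
  have hT6 : (∑ j, ∑ k : Fin n, ‖Y k‖ ^ 2 * ⟪Y j, Y k⟫ ^ 2) = (n : ℝ) * ∑ j, ‖Y j‖ ^ 4 := by
    rw [Finset.sum_comm, Finset.mul_sum]
    refine Finset.sum_congr rfl fun k _ => ?_
    rw [← Finset.mul_sum, h2' k]
    ring
  rw [hsplit, hT1, hT2, hT5, hT6]
  field_simp
  ring
end

section
/- Let Y_1, …, Y_n ∈ R^d satisfy Σ_j Y_j = 0 and Σ_j Y_j Y_jᵀ = n·I_d. Then Σ_{j,k=1}^n ‖Y_j + Y_k‖⁶ = 2n Σ_{j=1}^n ‖Y_j‖⁶ + 6(d+4)n² b_{2,d} + 8n² b_{1,d} + 12n² b̃_{1,d}, with b_{1,d}, b̃_{1,d}, b_{2,d} as the Mardia skewness, Móri–Rohatgi–Székely skewness, and Mardia kurtosis respectively. -/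
open scoped RealInnerProductSpace BigOperators

theorem standardized_sixth_power_sum (d n : ℕ) (hn : 0 < n)
    (Y : Fin n → EuclideanSpace ℝ (Fin d))
    (hmean : ∑ j, Y j = 0)
    (hcov : ∀ k l : Fin d, ∑ j, Y j k * Y j l = if k = l then (n : ℝ) else 0) :
    ∑ j, ∑ k, ‖Y j + Y k‖ ^ 6
      = 2 * (n : ℝ) * ∑ j, ‖Y j‖ ^ 6
        + 6 * ((d : ℝ) + 4) * (n : ℝ) ^ 2 * ((1 / (n : ℝ)) * ∑ j, ‖Y j‖ ^ 4)
        + 8 * (n : ℝ) ^ 2 * ((1 / (n : ℝ) ^ 2) * ∑ j, ∑ k, ⟪Y j, Y k⟫ ^ 3)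
        + 12 * (n : ℝ) ^ 2 *
            ((1 / (n : ℝ) ^ 2) * ∑ j, ∑ k, ⟪Y j, Y k⟫ * ‖Y j‖ ^ 2 * ‖Y k‖ ^ 2) := by
  have hn' : (n : ℝ) ≠ 0 := Nat.cast_ne_zero.mpr hn.ne'
  set a : Fin n → ℝ := fun j => ‖Y j‖ ^ 2 with ha
  set t : Fin n → Fin n → ℝ := fun j k => ⟪Y j, Y k⟫ with ht
  have hip : ∀ j k, t j k = ∑ l, Y j l * Y k l := by
    intro j k; simp [ht, PiLp.inner_apply, RCLike.inner_apply, mul_comm]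
  have hnorm : ∀ j, a j = ∑ l, Y j l * Y j l := by
    intro j; rw [ha]; dsimp only; rw [← real_inner_self_eq_norm_sq]
    simp only [PiLp.inner_apply, RCLike.inner_apply, conj_trivial, mul_comm]
  have symm_t : ∀ j k, t k j = t j k := by
    intro j k; simp only [ht]; exact real_inner_comm _ _
  -- sum of inner products vanishes
  have hs0 : ∀ j, ∑ k, t j k = 0 := by
    intro j
    simp only [ht]
    rw [← inner_sum, hmean, inner_zero_right]
  have hs0' : ∀ k, ∑ j, t j k = 0 := by
    intro k
    rw [Finset.sum_congr rfl fun j _ => symm_t k j, hs0 k]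
  -- sum of squares of inner products
  have hs2 : ∀ j, ∑ k, (t j k) ^ 2 = (n : ℝ) * a j := by
    intro j
    have h1 : ∀ k, (t j k) ^ 2 = ∑ l, ∑ m, (Y j l * Y j m) * (Y k l * Y k m) := by
      intro k
      rw [hip, sq, Finset.sum_mul_sum]
      apply Finset.sum_congr rfl; intro l _
      apply Finset.sum_congr rfl; intro m _
      ring
    calc ∑ k, (t j k) ^ 2
        = ∑ k, ∑ l, ∑ m, (Y j l * Y j m) * (Y k l * Y k m) :=
          Finset.sum_congr rfl fun k _ => h1 k
      _ = ∑ l, ∑ m, (Y j l * Y j m) * ∑ k, Y k l * Y k m := by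
          rw [Finset.sum_comm]
          apply Finset.sum_congr rfl; intro l _
          rw [Finset.sum_comm]
          apply Finset.sum_congr rfl; intro m _
          rw [Finset.mul_sum]
      _ = ∑ l, ∑ m, (Y j l * Y j m) * (if l = m then (n : ℝ) else 0) := by
          simp_rw [hcov]
      _ = ∑ l, (Y j l * Y j l) * (n : ℝ) := by
          apply Finset.sum_congr rfl; intro l _
          rw [Finset.sum_eq_single l]
          · simp
          · intro m _ hm; simp [Ne.symm hm]
          · intro h; simp at h
      _ = (n : ℝ) * a j := by rw [hnorm, ← Finset.sum_mul, mul_comm]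
  have hs2' : ∀ k, ∑ j, (t j k) ^ 2 = (n : ℝ) * a k := by
    intro k
    rw [Finset.sum_congr rfl fun j _ => by rw [symm_t k j], hs2 k]
  -- trace identity
  have htr : ∑ j, a j = (n : ℝ) * d := by
    calc ∑ j, a j = ∑ j, ∑ l, Y j l * Y j l := Finset.sum_congr rfl fun j _ => hnorm j
      _ = ∑ l : Fin d, ∑ j, Y j l * Y j l := Finset.sum_comm
      _ = ∑ l : Fin d, (n : ℝ) := by
          apply Finset.sum_congr rfl; intro l _; rw [hcov]; simp
      _ = (n : ℝ) * d := by simp [mul_comm]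
  -- pointwise expansion
  have expand : ∀ j k, ‖Y j + Y k‖ ^ 6
      = (a j)^3 + (a k)^3 + 8*(t j k)^3 + 3*(a j)^2*(a k) + 3*(a j)*(a k)^2
        + 6*(a j)^2*(t j k) + 6*(a k)^2*(t j k) + 12*(a j)*(t j k)^2
        + 12*(a k)*(t j k)^2 + 12*(a j)*(a k)*(t j k) := by
    intro j k
    have h2 : ‖Y j + Y k‖ ^ 2 = a j + 2 * t j k + a k := by
      rw [ha, ht]; dsimp only
      rw [norm_add_sq_real]
    have h6 : ‖Y j + Y k‖ ^ 6 = (‖Y j + Y k‖ ^ 2) ^ 3 := by ring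
    rw [h6, h2]; ring
  -- now the double sum
  have hsplit : ∑ j, ∑ k, ‖Y j + Y k‖ ^ 6
      = 2 * (n : ℝ) * (∑ j, (a j)^3) + 8 * (∑ j, ∑ k, (t j k)^3)
        + 6 * (∑ j, (a j)^2) * ((n : ℝ) * d) + 24 * (n : ℝ) * (∑ j, (a j)^2)
        + 12 * (∑ j, ∑ k, (a j) * (a k) * (t j k)) := by
    rw [Finset.sum_congr rfl fun j (_ : j ∈ Finset.univ) =>
      Finset.sum_congr rfl fun k (_ : k ∈ Finset.univ) => expand j k]
    simp only [Finset.sum_add_distrib]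
    have e1 : ∑ j : Fin n, ∑ _k : Fin n, (a j)^3 = (n : ℝ) * ∑ j, (a j)^3 := by
      simp [Finset.sum_const, mul_comm, Finset.mul_sum]
    have e2 : ∑ _j : Fin n, ∑ k : Fin n, (a k)^3 = (n : ℝ) * ∑ j, (a j)^3 := by
      simp [Finset.sum_const, mul_comm]
    have e3 : ∑ j : Fin n, ∑ k : Fin n, 8*(t j k)^3 = 8 * ∑ j, ∑ k, (t j k)^3 := by
      simp [Finset.mul_sum]
    have e4 : ∑ j : Fin n, ∑ k : Fin n, 3*(a j)^2*(a k)
        = 3 * (∑ j, (a j)^2) * ((n : ℝ) * d) := by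
      calc ∑ j : Fin n, ∑ k : Fin n, 3*(a j)^2*(a k)
          = ∑ j : Fin n, 3*(a j)^2 * ((n : ℝ) * d) := by
            apply Finset.sum_congr rfl; intro j _
            rw [← Finset.mul_sum, htr]
        _ = 3 * (∑ j, (a j)^2) * ((n : ℝ) * d) := by
            rw [← Finset.sum_mul, Finset.mul_sum]
    have e5 : ∑ j : Fin n, ∑ k : Fin n, 3*(a j)*(a k)^2
        = 3 * (∑ j, (a j)^2) * ((n : ℝ) * d) := by
      calc ∑ j : Fin n, ∑ k : Fin n, 3*(a j)*(a k)^2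
          = ∑ j : Fin n, (3*(a j)) * ∑ k, (a k)^2 := by
            apply Finset.sum_congr rfl; intro j _
            rw [← Finset.mul_sum]
        _ = 3 * ((n : ℝ) * d) * (∑ j, (a j)^2) := by
            rw [← Finset.sum_mul, ← Finset.mul_sum, htr]
        _ = 3 * (∑ j, (a j)^2) * ((n : ℝ) * d) := by ring
    have e6 : ∑ j : Fin n, ∑ k : Fin n, 6*(a j)^2*(t j k) = 0 := by
      apply Finset.sum_eq_zero; intro j _
      rw [← Finset.mul_sum, hs0 j, mul_zero]
    have e7 : ∑ j : Fin n, ∑ k : Fin n, 6*(a k)^2*(t j k) = 0 := by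
      rw [Finset.sum_comm]
      apply Finset.sum_eq_zero; intro k _
      rw [← Finset.mul_sum, hs0' k, mul_zero]
    have e8 : ∑ j : Fin n, ∑ k : Fin n, 12*(a j)*(t j k)^2
        = 12 * (n : ℝ) * (∑ j, (a j)^2) := by
      calc ∑ j : Fin n, ∑ k : Fin n, 12*(a j)*(t j k)^2
          = ∑ j : Fin n, (12*(a j)) * ((n : ℝ) * a j) := by
            apply Finset.sum_congr rfl; intro j _
            rw [← Finset.mul_sum, hs2 j]
        _ = 12 * (n : ℝ) * (∑ j, (a j)^2) := by
            rw [Finset.mul_sum]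
            apply Finset.sum_congr rfl; intro j _; ring
    have e9 : ∑ j : Fin n, ∑ k : Fin n, 12*(a k)*(t j k)^2
        = 12 * (n : ℝ) * (∑ j, (a j)^2) := by
      rw [Finset.sum_comm]
      calc ∑ k : Fin n, ∑ j : Fin n, 12*(a k)*(t j k)^2
          = ∑ k : Fin n, (12*(a k)) * ((n : ℝ) * a k) := by
            apply Finset.sum_congr rfl; intro k _
            rw [← Finset.mul_sum, hs2' k]
        _ = 12 * (n : ℝ) * (∑ j, (a j)^2) := by
            rw [Finset.mul_sum]
            apply Finset.sum_congr rfl; intro k _; ring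
    have e10 : ∑ j : Fin n, ∑ k : Fin n, 12*(a j)*(a k)*(t j k)
        = 12 * ∑ j, ∑ k, (a j) * (a k) * (t j k) := by
      rw [Finset.mul_sum]
      apply Finset.sum_congr rfl; intro j _
      rw [Finset.mul_sum]
      apply Finset.sum_congr rfl; intro k _; ring
    rw [e1, e2, e3, e4, e5, e6, e7, e8, e9, e10]; ring
  rw [hsplit]
  have g6 : ∑ j, ‖Y j‖ ^ 6 = ∑ j, (a j)^3 := by
    apply Finset.sum_congr rfl; intro j _; rw [ha]; ring
  have g4 : ∑ j, ‖Y j‖ ^ 4 = ∑ j, (a j)^2 := by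
    apply Finset.sum_congr rfl; intro j _; rw [ha]; ring
  have g3 : ∑ j, ∑ k, (⟪Y j, Y k⟫ : ℝ) ^ 3 = ∑ j, ∑ k, (t j k)^3 := by
    simp only [ht]
  have gU : ∑ j, ∑ k, (⟪Y j, Y k⟫ : ℝ) * ‖Y j‖ ^ 2 * ‖Y k‖ ^ 2
      = ∑ j, ∑ k, (a j) * (a k) * (t j k) := by
    apply Finset.sum_congr rfl; intro j _
    apply Finset.sum_congr rfl; intro k _
    simp only [ht, ha]; ring
  rw [g6, g4, g3, gU]
  field_simp
  ring
end

section
/- Let Y_1, …, Y_n ∈ R^d satisfy Σ_j Y_j = 0 and Σ_j Y_j Y_jᵀ = n·I_d, and define T_{n,β} by the closed form π^{d/2}[ (1/n)Σ_{i,j} β^{-d/2} exp(‖Y_i+Y_j‖²/(4β)) + n(β-1)^{-d/2} - 2Σ_j (β-1/2)^{-d/2} exp(‖Y_j‖²/(4β-2)) ]. Then lim_{β→∞} β^{3+d/2} · (96 T_{n,β})/(n π^{d/2}) = 2 b_{1,d} + 3 b̃_{1,d}, where b_{1,d} = n^{-2} Σ_{j,k} (Y_jᵀY_k)³ and b̃_{1,d}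 = n^{-2} Σ_{j,k} (Y_jᵀY_k)‖Y_j‖²‖Y_k‖². -/
open Filter
open scoped RealInnerProductSpace BigOperators Topology

open Filter Real
open scoped Topology

/-- g has a cubic expansion at 0⁺ with remainder o(u³). -/
def HasCubic (g : ℝ → ℝ) (a0 a1 a2 a3 : ℝ) : Prop :=
  Tendsto (fun u => (g u - (a0 + a1*u + a2*u^2 + a3*u^3)) / u^3) (𝓝[>] (0:ℝ)) (𝓝 0)

lemma ev_pos : ∀ᶠ u in 𝓝[>] (0:ℝ), 0 < u := self_mem_nhdsWithin

lemma tendsto_id0 : Tendsto (fun u : ℝ => u) (𝓝[>] (0:ℝ)) (𝓝 0) :=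
  tendsto_id.mono_left nhdsWithin_le_nhds

lemma tendsto_poly0 (b0 b1 b2 b3 : ℝ) :
    Tendsto (fun u : ℝ => b0 + b1*u + b2*u^2 + b3*u^3) (𝓝[>] (0:ℝ)) (𝓝 b0) := by
  have : Continuous (fun u : ℝ => b0 + b1*u + b2*u^2 + b3*u^3) := by continuity
  have := (this.tendsto 0).mono_left (nhdsWithin_le_nhds (s := Set.Ioi (0:ℝ)))
  norm_num at this
  exact this

lemma HasCubic.congr {g h : ℝ → ℝ} {a0 a1 a2 a3 : ℝ}
    (hev : ∀ᶠ u in 𝓝[>] (0:ℝ), g u = h u) (hg : HasCubic g a0 a1 a2 a3) :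
    HasCubic h a0 a1 a2 a3 := by
  refine Filter.Tendsto.congr' ?_ hg
  filter_upwards [hev] with u hu
  rw [hu]

lemma hasCubic_poly (a0 a1 a2 a3 : ℝ) :
    HasCubic (fun u => a0 + a1*u + a2*u^2 + a3*u^3) a0 a1 a2 a3 := by
  have : (fun u : ℝ => (a0 + a1*u + a2*u^2 + a3*u^3 - (a0 + a1*u + a2*u^2 + a3*u^3)) / u^3)
      = fun _ => (0:ℝ) := by funext u; simp
  rw [HasCubic, this]; exact tendsto_const_nhds

lemma hasCubic_const (a : ℝ) : HasCubic (fun _ => a) a 0 0 0 :=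
  (hasCubic_poly a 0 0 0).congr (by filter_upwards with u; ring)

lemma HasCubic.add {f g : ℝ → ℝ} {a0 a1 a2 a3 b0 b1 b2 b3 : ℝ}
    (hf : HasCubic f a0 a1 a2 a3) (hg : HasCubic g b0 b1 b2 b3) :
    HasCubic (fun u => f u + g u) (a0+b0) (a1+b1) (a2+b2) (a3+b3) := by
  have h := Filter.Tendsto.add hf hg
  rw [add_zero] at h
  refine Filter.Tendsto.congr' ?_ h
  filter_upwards with u
  ring

lemma HasCubic.const_mul {f : ℝ → ℝ} {a0 a1 a2 a3 : ℝ} (c : ℝ)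
    (hf : HasCubic f a0 a1 a2 a3) :
    HasCubic (fun u => c * f u) (c*a0) (c*a1) (c*a2) (c*a3) := by
  have h := Filter.Tendsto.const_mul c hf
  rw [mul_zero] at h
  refine Filter.Tendsto.congr' ?_ h
  filter_upwards with u
  ring

lemma HasCubic.sub {f g : ℝ → ℝ} {a0 a1 a2 a3 b0 b1 b2 b3 : ℝ}
    (hf : HasCubic f a0 a1 a2 a3) (hg : HasCubic g b0 b1 b2 b3) :
    HasCubic (fun u => f u - g u) (a0-b0) (a1-b1) (a2-b2) (a3-b3) := by
  have h := hf.add (hg.const_mul (-1))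
  have e0 : a0 - b0 = a0 + (-1)*b0 := by ring
  have e1 : a1 - b1 = a1 + (-1)*b1 := by ring
  have e2 : a2 - b2 = a2 + (-1)*b2 := by ring
  have e3 : a3 - b3 = a3 + (-1)*b3 := by ring
  rw [e0, e1, e2, e3]
  exact h.congr (by filter_upwards with u; ring)

lemma hasCubic_sum {ι : Type*} (s : Finset ι) (f : ι → ℝ → ℝ)
    (a0 a1 a2 a3 : ι → ℝ) (h : ∀ i ∈ s, HasCubic (f i) (a0 i) (a1 i) (a2 i) (a3 i)) :
    HasCubic (fun u => ∑ i ∈ s, f i u) (∑ i ∈ s, a0 i) (∑ i ∈ s, a1 i)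
      (∑ i ∈ s, a2 i) (∑ i ∈ s, a3 i) := by
  have h2 := tendsto_finset_sum s h
  rw [Finset.sum_const_zero] at h2
  refine Filter.Tendsto.congr' ?_ h2
  filter_upwards with u
  rw [← Finset.sum_div]
  congr 1
  rw [Finset.sum_sub_distrib]
  congr 1
  simp [Finset.sum_add_distrib, Finset.sum_mul]

lemma HasCubic.tendsto_a0 {f : ℝ → ℝ} {a0 a1 a2 a3 : ℝ} (hf : HasCubic f a0 a1 a2 a3) :
    Tendsto f (𝓝[>] (0:ℝ)) (𝓝 a0) := by
  have h2 : Tendsto (fun u : ℝ => u^3) (𝓝[>] (0:ℝ)) (𝓝 0) := by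
    have := tendsto_id0.pow 3
    simpa using this
  have h3 := Filter.Tendsto.mul hf h2
  rw [mul_zero] at h3
  have h := h3.add (tendsto_poly0 a0 a1 a2 a3)
  rw [zero_add] at h
  refine Filter.Tendsto.congr' ?_ h
  filter_upwards [ev_pos] with u hu
  field_simp
  ring

lemma HasCubic.mul {f g : ℝ → ℝ} {a0 a1 a2 a3 b0 b1 b2 b3 : ℝ}
    (hf : HasCubic f a0 a1 a2 a3) (hg : HasCubic g b0 b1 b2 b3) :
    HasCubic (fun u => f u * g u) (a0*b0) (a0*b1+a1*b0) (a0*b2+a1*b1+a2*b0)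
      (a0*b3+a1*b2+a2*b1+a3*b0) := by
  have h1 := Filter.Tendsto.mul (hf : Tendsto _ _ _) hg.tendsto_a0
  rw [zero_mul] at h1
  have h2 := Filter.Tendsto.mul (tendsto_poly0 a0 a1 a2 a3) (hg : Tendsto _ _ _)
  rw [mul_zero] at h2
  have h3 : Tendsto (fun u : ℝ => u * ((a1*b3+a2*b2+a3*b1) + (a2*b3+a3*b2)*u + a3*b3*u^2))
      (𝓝[>] (0:ℝ)) (𝓝 0) := by
    have hc : Continuous (fun u : ℝ => u * ((a1*b3+a2*b2+a3*b1) + (a2*b3+a3*b2)*u + a3*b3*u^2)) := by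
      continuity
    have := (hc.tendsto 0).mono_left (nhdsWithin_le_nhds (s := Set.Ioi (0:ℝ)))
    norm_num at this
    exact this
  have h := (h1.add h2).add h3
  norm_num at h
  refine Filter.Tendsto.congr' ?_ h
  filter_upwards [ev_pos] with u hu
  have hu3 : u^3 ≠ 0 := by positivity
  field_simp
  ring

lemma HasCubic.of_eq {f : ℝ → ℝ} {a0 a1 a2 a3 b0 b1 b2 b3 : ℝ}
    (hf : HasCubic f a0 a1 a2 a3) (h0 : a0 = b0) (h1 : a1 = b1) (h2 : a2 = b2) (h3 : a3 = b3) :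
    HasCubic f b0 b1 b2 b3 := by subst h0 h1 h2 h3; exact hf

lemma ev_lt {c : ℝ} (hc : 0 < c) : ∀ᶠ u in 𝓝[>] (0:ℝ), u < c :=
  tendsto_id0.eventually_lt_const hc

lemma exp_poly3_bound {y : ℝ} (hy : |y| ≤ 1) :
    |Real.exp y - (1 + y + y^2/2 + y^3/6)| ≤ |y|^4 := by
  have h := Real.exp_bound hy (n := 4) (by norm_num)
  have hs : ∑ m ∈ Finset.range 4, y ^ m / (Nat.factorial m : ℝ) = 1 + y + y^2/2 + y^3/6 := by
    rw [Finset.sum_range_succ, Finset.sum_range_succ, Finset.sum_range_succ,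
      Finset.sum_range_succ, Finset.sum_range_zero]
    norm_num [Nat.factorial]
  rw [hs] at h
  refine h.trans ?_
  norm_num [Nat.factorial]
  nlinarith [pow_nonneg (abs_nonneg y) 4]

lemma HasCubic.exp_comp {x : ℝ → ℝ} {b1 b2 b3 : ℝ} (hx : HasCubic x 0 b1 b2 b3) :
    HasCubic (fun u => Real.exp (x u)) 1 b1 (b2 + b1^2/2) (b3 + b1*b2 + b1^3/6) := by
  -- x(u)/u → b1
  have hxu : Tendsto (fun u => x u / u) (𝓝[>] (0:ℝ)) (𝓝 b1) := by
    have h2 : Tendsto (fun u : ℝ => u^2) (𝓝[>] (0:ℝ)) (𝓝 0) := by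
      have := tendsto_id0.pow 2; simpa using this
    have h3 := Filter.Tendsto.mul (hx : Tendsto _ _ _) h2
    rw [mul_zero] at h3
    have h4 := h3.add (tendsto_poly0 b1 b2 b3 0)
    rw [zero_add] at h4
    refine Filter.Tendsto.congr' ?_ h4
    filter_upwards [ev_pos] with u hu
    have : u ≠ 0 := ne_of_gt hu
    field_simp
    ring
  have hbd : ∀ᶠ u in 𝓝[>] (0:ℝ), |x u| ≤ (|b1|+1) * u := by
    have h5 : ∀ᶠ u in 𝓝[>] (0:ℝ), |x u / u - b1| < 1 := by
      have := hxu.sub_const b1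
      have habs := this.abs
      rw [sub_self, abs_zero] at habs
      exact habs.eventually_lt_const one_pos
    filter_upwards [h5, ev_pos] with u h5 hu
    have : |x u / u| ≤ |b1| + 1 := by
      have := abs_sub_abs_le_abs_sub (x u / u) b1
      linarith
    rw [abs_div, abs_of_pos hu] at this
    calc |x u| = |x u| / u * u := by field_simp
      _ ≤ (|b1|+1) * u := by
        apply mul_le_mul_of_nonneg_right this (le_of_lt hu)
  have hsmall : ∀ᶠ u in 𝓝[>] (0:ℝ), |x u| ≤ 1 := by
    have h8 := (hx.tendsto_a0).abs
    rw [abs_zero] at h8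
    filter_upwards [h8.eventually_lt_const one_pos] with u h using le_of_lt h
  -- (exp(x u) - P3(x u))/u³ → 0
  have key : Tendsto (fun u => (Real.exp (x u) - (1 + x u + (x u)^2/2 + (x u)^3/6)) / u^3)
      (𝓝[>] (0:ℝ)) (𝓝 0) := by
    apply squeeze_zero_norm' (a := fun u => (|b1|+1)^4 * u)
    · filter_upwards [hbd, hsmall, ev_pos] with u hbd hsmall hu
      have h6 := exp_poly3_bound hsmall
      have h7 : |x u|^4 ≤ ((|b1|+1)*u)^4 := by
        apply pow_le_pow_left₀ (abs_nonneg _) hbd 4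
      rw [Real.norm_eq_abs, abs_div, abs_of_pos (by positivity : (0:ℝ) < u^3)]
      rw [div_le_iff₀ (by positivity)]
      calc |Real.exp (x u) - (1 + x u + (x u)^2/2 + (x u)^3/6)| ≤ |x u|^4 := h6
        _ ≤ ((|b1|+1)*u)^4 := h7
        _ = (|b1|+1)^4 * u * u^3 := by ring
    · have : Tendsto (fun u : ℝ => (|b1|+1)^4 * u) (𝓝[>] (0:ℝ)) (𝓝 ((|b1|+1)^4 * 0)) :=
        tendsto_id0.const_mul _
      simpa using this
  -- P3 ∘ x has cubic expansion
  have hx2 := hx.mul hx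
  have hx3 := hx.mul hx2
  have hp3 : HasCubic (fun u => 1 + x u + (x u)^2/2 + (x u)^3/6) 1 b1 (b2 + b1^2/2)
      (b3 + b1*b2 + b1^3/6) := by
    have h := ((hasCubic_const 1).add hx).add
      (((hx2.const_mul (1/2)).add (hx3.const_mul (1/6))).of_eq rfl rfl rfl rfl)
    have h2 := h.congr (h := fun u => 1 + x u + (x u)^2/2 + (x u)^3/6)
      (by filter_upwards with u; ring)
    exact h2.of_eq (by ring) (by ring) (by ring) (by ring)
  -- combine
  have h := Filter.Tendsto.add key (hp3 : Tendsto _ _ _)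
  rw [zero_add] at h
  refine Filter.Tendsto.congr' ?_ h
  filter_upwards [ev_pos] with u hu
  have : u^3 ≠ 0 := by positivity
  field_simp
  ring

lemma hasCubic_neg_log : HasCubic (fun u => -Real.log (1 - u)) 0 1 (1/2) (1/3) := by
  apply squeeze_zero_norm' (a := fun u : ℝ => 2 * u)
  · filter_upwards [ev_pos, ev_lt (by norm_num : (0:ℝ) < 1/2)] with u hu hu2
    have habs : |u| < 1 := by rw [abs_of_pos hu]; linarith
    have h := Real.abs_log_sub_add_sum_range_le habs 3
    have hs : ∑ i ∈ Finset.range 3, u ^ (i+1) / ((i:ℝ) + 1) = u + u^2/2 + u^3/3 := by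
      simp [Finset.sum_range_succ]
      ring
    rw [hs] at h
    rw [Real.norm_eq_abs, abs_div, abs_of_pos (by positivity : (0:ℝ) < u^3)]
    rw [div_le_iff₀ (by positivity)]
    have he : -Real.log (1-u) - (0 + 1*u + 1/2*u^2 + 1/3*u^3) = -(u + u^2/2 + u^3/3 + Real.log (1-u)) := by ring
    rw [he, abs_neg]
    rw [abs_of_pos hu] at h
    calc |u + u^2/2 + u^3/3 + Real.log (1-u)| ≤ u^4 / (1 - u) := h
      _ ≤ 2 * u * u^3 := by
        rw [div_le_iff₀ (by linarith)]
        nlinarith [mul_nonneg (pow_nonneg hu.le 4) (by linarith : (0:ℝ) ≤ 1 - 2*u)]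
  · have : Tendsto (fun u : ℝ => 2 * u) (𝓝[>] (0:ℝ)) (𝓝 (2 * 0)) := tendsto_id0.const_mul _
    simpa using this

lemma hasCubic_rpow (p : ℝ) :
    HasCubic (fun u => (1 - u) ^ (-p)) 1 p (p*(p+1)/2) (p*(p+1)*(p+2)/6) := by
  have hx : HasCubic (fun u => p * (-Real.log (1 - u))) 0 p (p*(1/2)) (p*(1/3)) := by
    have := hasCubic_neg_log.const_mul p
    exact this.of_eq (by ring) (by ring) rfl rfl
  have h := hx.exp_comp
  have hev : ∀ᶠ u in 𝓝[>] (0:ℝ), Real.exp (p * -Real.log (1-u)) = (1 - u) ^ (-p) := by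
    filter_upwards [ev_pos, ev_lt (by norm_num : (0:ℝ) < 1)] with u hu hu1
    rw [Real.rpow_def_of_pos (by linarith)]
    congr 1
    ring
  exact (h.congr hev).of_eq rfl rfl (by ring) (by ring)

lemma HasCubic.scale {g : ℝ → ℝ} {a0 a1 a2 a3 : ℝ} {s : ℝ} (hs : 0 < s)
    (hg : HasCubic g a0 a1 a2 a3) :
    HasCubic (fun u => g (s * u)) a0 (a1*s) (a2*s^2) (a3*s^3) := by
  have hm : Tendsto (fun u : ℝ => s * u) (𝓝[>] (0:ℝ)) (𝓝[>] (0:ℝ)) := by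
    rw [tendsto_nhdsWithin_iff]
    constructor
    · have : Tendsto (fun u : ℝ => s * u) (𝓝[>] (0:ℝ)) (𝓝 (s * 0)) := tendsto_id0.const_mul _
      simpa using this
    · filter_upwards [ev_pos] with u hu
      exact mul_pos hs hu
  have h := (hg : Tendsto _ _ _).comp hm
  have h2 := h.const_mul (s^3)
  rw [mul_zero] at h2
  refine Filter.Tendsto.congr' ?_ h2
  filter_upwards [ev_pos] with u hu
  simp only [Function.comp]
  have hu3 : u ≠ 0 := ne_of_gt hu
  have hsu : s * u ≠ 0 := by positivity
  field_simp


lemma hasCubic_ratarg (c : ℝ) :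
    HasCubic (fun u => c * u / (4 - 2*u)) 0 (c/4) (c/8) (c/16) := by
  have h : Tendsto (fun u : ℝ => c * u / (8 * (4 - 2*u))) (𝓝[>] (0:ℝ)) (𝓝 0) := by
    have hnum : Tendsto (fun u : ℝ => c * u) (𝓝[>] (0:ℝ)) (𝓝 0) := by
      have : Tendsto (fun u : ℝ => c * u) (𝓝[>] (0:ℝ)) (𝓝 (c * 0)) := tendsto_id0.const_mul _
      simpa using this
    have hden : Tendsto (fun u : ℝ => 8 * (4 - 2*u)) (𝓝[>] (0:ℝ)) (𝓝 32) := by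
      have hc : Continuous (fun u : ℝ => 8 * (4 - 2*u)) := by continuity
      have := (hc.tendsto 0).mono_left (nhdsWithin_le_nhds (s := Set.Ioi (0:ℝ)))
      norm_num at this
      exact this
    have := hnum.div hden (by norm_num)
    rw [zero_div] at this; exact this
  refine Filter.Tendsto.congr' ?_ h
  filter_upwards [ev_pos, ev_lt one_pos] with u hu hu1
  have h1 : (4:ℝ) - 2*u ≠ 0 := by nlinarith
  have h2 : u ≠ 0 := ne_of_gt hu
  have h1' : (4:ℝ) - u*2 ≠ 0 := by nlinarith
  field_simp
  ring

lemma HasCubic.tendsto_div_cube {g : ℝ → ℝ} {a3 : ℝ} (hg : HasCubic g 0 0 0 a3) :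
    Tendsto (fun u => g u / u^3) (𝓝[>] (0:ℝ)) (𝓝 a3) := by
  have h := (hg : Tendsto _ _ _).add_const a3
  rw [zero_add] at h
  refine Filter.Tendsto.congr' ?_ h
  filter_upwards [ev_pos] with u hu
  have : u^3 ≠ 0 := by positivity
  field_simp
  ring

open scoped RealInnerProductSpace
section Ident
variable (d n : ℕ) (Y : Fin n → EuclideanSpace ℝ (Fin d))

lemma inner_formula (x y : EuclideanSpace ℝ (Fin d)) : ⟪x, y⟫ = ∑ k, x k * y k := by
  rw [PiLp.inner_apply]; simp [RCLike.inner_apply]; exact Finset.sum_congr rfl (fun _ _ => mul_comm _ _)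

lemma csum_eq (hcov : ∀ k l : Fin d, ∑ j, Y j k * Y j l = if k = l then (n : ℝ) else 0) :
    ∑ j, ‖Y j‖^2 = (n:ℝ) * d := by
  have h : ∀ j, ‖Y j‖^2 = ∑ k, Y j k * Y j k := by
    intro j
    rw [← real_inner_self_eq_norm_sq, inner_formula]
  calc ∑ j, ‖Y j‖^2 = ∑ j, ∑ k, Y j k * Y j k := by simp_rw [h]
    _ = ∑ k : Fin d, ∑ j, Y j k * Y j k := Finset.sum_comm
    _ = ∑ k : Fin d, (n:ℝ) := by
        apply Finset.sum_congr rfl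
        intro k _
        rw [hcov k k, if_pos rfl]
    _ = (n:ℝ) * d := by simp [mul_comm]

lemma ssq_eq (hcov : ∀ k l : Fin d, ∑ j, Y j k * Y j l = if k = l then (n : ℝ) else 0)
    (i : Fin n) : ∑ j, ⟪Y i, Y j⟫^2 = (n:ℝ) * ‖Y i‖^2 := by
  have h : ∀ j, ⟪Y i, Y j⟫^2 = ∑ k, ∑ l, (Y i k * Y i l) * (Y j k * Y j l) := by
    intro j
    rw [inner_formula, sq, Finset.sum_mul_sum]
    apply Finset.sum_congr rfl; intro k _
    apply Finset.sum_congr rfl; intro l _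
    ring
  calc ∑ j, ⟪Y i, Y j⟫^2 = ∑ j, ∑ k, ∑ l, (Y i k * Y i l) * (Y j k * Y j l) := by simp_rw [h]
    _ = ∑ k, ∑ j, ∑ l, (Y i k * Y i l) * (Y j k * Y j l) := Finset.sum_comm
    _ = ∑ k, ∑ l, ∑ j, (Y i k * Y i l) * (Y j k * Y j l) := by
        apply Finset.sum_congr rfl; intro k _; exact Finset.sum_comm
    _ = ∑ k, ∑ l, (Y i k * Y i l) * ∑ j, (Y j k * Y j l) := by
        simp_rw [Finset.mul_sum]
    _ = ∑ k, ∑ l, (Y i k * Y i l) * (if k = l then (n:ℝ) else 0) := by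
        simp_rw [hcov]
    _ = ∑ k, (Y i k * Y i k) * (n:ℝ) := by
        apply Finset.sum_congr rfl; intro k _
        simp
    _ = (n:ℝ) * ‖Y i‖^2 := by
        rw [← real_inner_self_eq_norm_sq, inner_formula, Finset.mul_sum]
        apply Finset.sum_congr rfl; intro k _; ring

end Ident

section Ident2
variable {d n : ℕ} {Y : Fin n → EuclideanSpace ℝ (Fin d)}

lemma s0r (hmean : ∑ j, Y j = 0) (i : Fin n) : ∑ j, ⟪Y i, Y j⟫ = 0 := by
  rw [← inner_sum, hmean, inner_zero_right]

lemma s0l (hmean : ∑ j, Y j = 0) (j : Fin n) : ∑ i, ⟪Y i, Y j⟫ = 0 := by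
  rw [← sum_inner, hmean, inner_zero_left]

lemma ssq_eq' (hcov : ∀ k l : Fin d, ∑ j, Y j k * Y j l = if k = l then (n : ℝ) else 0)
    (j : Fin n) : ∑ i, ⟪Y i, Y j⟫^2 = (n:ℝ) * ‖Y j‖^2 := by
  calc ∑ i, ⟪Y i, Y j⟫^2 = ∑ i, ⟪Y j, Y i⟫^2 := by
        apply Finset.sum_congr rfl; intro i _; rw [real_inner_comm]
    _ = (n:ℝ) * ‖Y j‖^2 := ssq_eq d n Y hcov j

lemma T1 (hmean : ∑ j, Y j = 0) :
    ∑ i, ∑ j, ‖Y i + Y j‖^2 = 2*(n:ℝ)*(∑ j, ‖Y j‖^2) := by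
  have expand : ∑ i, ∑ j, ‖Y i + Y j‖^2
      = ∑ i : Fin n, ∑ j : Fin n, (‖Y i‖^2 + ‖Y j‖^2 + 2*⟪Y i, Y j⟫) := by
    apply Finset.sum_congr rfl; intro i _
    apply Finset.sum_congr rfl; intro j _
    rw [norm_add_sq_real]; ring
  rw [expand]
  simp only [Finset.sum_add_distrib]
  have h1 : ∑ i : Fin n, ∑ _j : Fin n, ‖Y i‖^2 = (n:ℝ) * ∑ j, ‖Y j‖^2 := by
    simp [Finset.sum_const, Finset.card_univ, Finset.mul_sum]
  have h2 : ∑ _i : Fin n, ∑ j : Fin n, ‖Y j‖^2 = (n:ℝ) * ∑ j, ‖Y j‖^2 := by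
    simp [Finset.sum_const, Finset.card_univ]
  have h3 : ∑ i : Fin n, ∑ j : Fin n, 2*⟪Y i, Y j⟫ = 0 := by
    apply Finset.sum_eq_zero; intro i _
    rw [← Finset.mul_sum, s0r hmean, mul_zero]
  rw [h1, h2, h3]; ring

lemma T2 (hmean : ∑ j, Y j = 0)
    (hcov : ∀ k l : Fin d, ∑ j, Y j k * Y j l = if k = l then (n : ℝ) else 0) :
    ∑ i, ∑ j, (‖Y i + Y j‖^2)^2
    = 2*(n:ℝ)*(∑ j, (‖Y j‖^2)^2) + 2*(∑ j, ‖Y j‖^2)^2 + 4*(n:ℝ)*(∑ j, ‖Y j‖^2) := by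
  have expand : ∑ i, ∑ j, (‖Y i + Y j‖^2)^2
      = ∑ i : Fin n, ∑ j : Fin n, ((‖Y i‖^2)^2 + (‖Y j‖^2)^2 + 4*⟪Y i, Y j⟫^2
          + 2*(‖Y i‖^2*‖Y j‖^2) + 4*(‖Y i‖^2*⟪Y i, Y j⟫) + 4*(‖Y j‖^2*⟪Y i, Y j⟫)) := by
    apply Finset.sum_congr rfl; intro i _
    apply Finset.sum_congr rfl; intro j _
    rw [norm_add_sq_real]; ring
  rw [expand]
  simp only [Finset.sum_add_distrib]
  have h1 : ∑ i : Fin n, ∑ _j : Fin n, (‖Y i‖^2)^2 = (n:ℝ) * ∑ j, (‖Y j‖^2)^2 := by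
    simp [Finset.sum_const, Finset.card_univ, Finset.mul_sum]
  have h2 : ∑ _i : Fin n, ∑ j : Fin n, (‖Y j‖^2)^2 = (n:ℝ) * ∑ j, (‖Y j‖^2)^2 := by
    simp [Finset.sum_const, Finset.card_univ]
  have h3 : ∑ i : Fin n, ∑ j : Fin n, 4*⟪Y i, Y j⟫^2 = 4*(n:ℝ)*(∑ j, ‖Y j‖^2) := by
    have e : ∀ i : Fin n, ∑ j : Fin n, 4*⟪Y i, Y j⟫^2 = 4*((n:ℝ)*‖Y i‖^2) := by
      intro i
      rw [← Finset.mul_sum, ssq_eq d n Y hcov i]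
    rw [Finset.sum_congr rfl (fun i _ => e i), ← Finset.mul_sum, ← Finset.mul_sum]
    ring
  have h4 : ∑ i : Fin n, ∑ j : Fin n, 2*(‖Y i‖^2*‖Y j‖^2) = 2*(∑ j, ‖Y j‖^2)^2 := by
    have e : ∀ i : Fin n, ∑ j : Fin n, 2*(‖Y i‖^2*‖Y j‖^2)
        = (2*‖Y i‖^2) * ∑ j, ‖Y j‖^2 := by
      intro i
      rw [← Finset.mul_sum, ← Finset.mul_sum]
      ring
    rw [Finset.sum_congr rfl (fun i _ => e i), ← Finset.sum_mul, ← Finset.mul_sum, sq]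
    try ring
  have h5 : ∑ i : Fin n, ∑ j : Fin n, 4*(‖Y i‖^2*⟪Y i, Y j⟫) = 0 := by
    apply Finset.sum_eq_zero; intro i _
    have e : ∑ j : Fin n, 4*(‖Y i‖^2*⟪Y i, Y j⟫) = (4*‖Y i‖^2) * ∑ j, ⟪Y i, Y j⟫ := by
      rw [Finset.mul_sum]
      apply Finset.sum_congr rfl; intro j _; ring
    rw [e, s0r hmean, mul_zero]
  have h6 : ∑ i : Fin n, ∑ j : Fin n, 4*(‖Y j‖^2*⟪Y i, Y j⟫) = 0 := by
    rw [Finset.sum_comm]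
    apply Finset.sum_eq_zero; intro j _
    have e : ∑ i : Fin n, 4*(‖Y j‖^2*⟪Y i, Y j⟫) = (4*‖Y j‖^2) * ∑ i, ⟪Y i, Y j⟫ := by
      rw [Finset.mul_sum]
      apply Finset.sum_congr rfl; intro i _; ring
    rw [e, s0l hmean, mul_zero]
  rw [h1, h2, h3, h4, h5, h6]; ring

lemma T3 (hmean : ∑ j, Y j = 0)
    (hcov : ∀ k l : Fin d, ∑ j, Y j k * Y j l = if k = l then (n : ℝ) else 0) :
    ∑ i, ∑ j, (‖Y i + Y j‖^2)^3
    = 2*(n:ℝ)*(∑ j, (‖Y j‖^2)^3) + 6*(∑ j, (‖Y j‖^2)^2)*(∑ j, ‖Y j‖^2)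
      + 24*(n:ℝ)*(∑ j, (‖Y j‖^2)^2) + 8*(∑ i, ∑ j, ⟪Y i, Y j⟫^3)
      + 12*(∑ i, ∑ j, ⟪Y i, Y j⟫ * ‖Y i‖^2 * ‖Y j‖^2) := by
  have expand : ∑ i, ∑ j, (‖Y i + Y j‖^2)^3
      = ∑ i : Fin n, ∑ j : Fin n, ((‖Y i‖^2)^3 + (‖Y j‖^2)^3 + 8*⟪Y i, Y j⟫^3
          + 3*((‖Y i‖^2)^2*‖Y j‖^2) + 3*(‖Y i‖^2*(‖Y j‖^2)^2)
          + 6*((‖Y i‖^2)^2*⟪Y i, Y j⟫) + 6*((‖Y j‖^2)^2*⟪Y i, Y j⟫)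
          + 12*(‖Y i‖^2*⟪Y i, Y j⟫^2) + 12*(‖Y j‖^2*⟪Y i, Y j⟫^2)
          + 12*(⟪Y i, Y j⟫ * ‖Y i‖^2 * ‖Y j‖^2)) := by
    apply Finset.sum_congr rfl; intro i _
    apply Finset.sum_congr rfl; intro j _
    rw [norm_add_sq_real]; ring
  rw [expand]
  simp only [Finset.sum_add_distrib]
  have h1 : ∑ i : Fin n, ∑ _j : Fin n, (‖Y i‖^2)^3 = (n:ℝ) * ∑ j, (‖Y j‖^2)^3 := by
    simp [Finset.sum_const, Finset.card_univ, Finset.mul_sum]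
  have h2 : ∑ _i : Fin n, ∑ j : Fin n, (‖Y j‖^2)^3 = (n:ℝ) * ∑ j, (‖Y j‖^2)^3 := by
    simp [Finset.sum_const, Finset.card_univ]
  have h3 : ∑ i : Fin n, ∑ j : Fin n, 8*⟪Y i, Y j⟫^3 = 8*(∑ i, ∑ j, ⟪Y i, Y j⟫^3) := by
    rw [Finset.mul_sum]
    apply Finset.sum_congr rfl; intro i _
    rw [← Finset.mul_sum]
  have h4 : ∑ i : Fin n, ∑ j : Fin n, 3*((‖Y i‖^2)^2*‖Y j‖^2)
      = 3*(∑ j, (‖Y j‖^2)^2)*(∑ j, ‖Y j‖^2) := by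
    have e : ∀ i : Fin n, ∑ j : Fin n, 3*((‖Y i‖^2)^2*‖Y j‖^2)
        = (3*(‖Y i‖^2)^2) * ∑ j, ‖Y j‖^2 := by
      intro i
      rw [Finset.mul_sum]
      apply Finset.sum_congr rfl; intro j _; ring
    rw [Finset.sum_congr rfl (fun i _ => e i), ← Finset.sum_mul, ← Finset.mul_sum]
    try ring
  have h5 : ∑ i : Fin n, ∑ j : Fin n, 3*(‖Y i‖^2*(‖Y j‖^2)^2)
      = 3*(∑ j, (‖Y j‖^2)^2)*(∑ j, ‖Y j‖^2) := by
    have e : ∀ i : Fin n, ∑ j : Fin n, 3*(‖Y i‖^2*(‖Y j‖^2)^2)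
        = (3*‖Y i‖^2) * ∑ j, (‖Y j‖^2)^2 := by
      intro i
      rw [Finset.mul_sum]
      apply Finset.sum_congr rfl; intro j _; ring
    rw [Finset.sum_congr rfl (fun i _ => e i), ← Finset.sum_mul, ← Finset.mul_sum]
    try ring
  have h6 : ∑ i : Fin n, ∑ j : Fin n, 6*((‖Y i‖^2)^2*⟪Y i, Y j⟫) = 0 := by
    apply Finset.sum_eq_zero; intro i _
    have e : ∑ j : Fin n, 6*((‖Y i‖^2)^2*⟪Y i, Y j⟫) = (6*(‖Y i‖^2)^2) * ∑ j, ⟪Y i, Y j⟫ := by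
      rw [Finset.mul_sum]
      apply Finset.sum_congr rfl; intro j _; ring
    rw [e, s0r hmean, mul_zero]
  have h7 : ∑ i : Fin n, ∑ j : Fin n, 6*((‖Y j‖^2)^2*⟪Y i, Y j⟫) = 0 := by
    rw [Finset.sum_comm]
    apply Finset.sum_eq_zero; intro j _
    have e : ∑ i : Fin n, 6*((‖Y j‖^2)^2*⟪Y i, Y j⟫) = (6*(‖Y j‖^2)^2) * ∑ i, ⟪Y i, Y j⟫ := by
      rw [Finset.mul_sum]
      apply Finset.sum_congr rfl; intro i _; ring
    rw [e, s0l hmean, mul_zero]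
  have h8 : ∑ i : Fin n, ∑ j : Fin n, 12*(‖Y i‖^2*⟪Y i, Y j⟫^2)
      = 12*(n:ℝ)*(∑ j, (‖Y j‖^2)^2) := by
    have e : ∀ i : Fin n, ∑ j : Fin n, 12*(‖Y i‖^2*⟪Y i, Y j⟫^2)
        = (12*‖Y i‖^2) * ((n:ℝ)*‖Y i‖^2) := by
      intro i
      have e2 : ∑ j : Fin n, 12*(‖Y i‖^2*⟪Y i, Y j⟫^2)
          = (12*‖Y i‖^2) * ∑ j, ⟪Y i, Y j⟫^2 := by
        rw [Finset.mul_sum]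
        apply Finset.sum_congr rfl; intro j _; ring
      rw [e2, ssq_eq d n Y hcov i]
    rw [Finset.sum_congr rfl (fun i _ => e i)]
    rw [show (fun i => (12*‖Y i‖^2) * ((n:ℝ)*‖Y i‖^2)) = (fun i => (12*(n:ℝ)) * (‖Y i‖^2)^2) by
      funext i; ring]
    rw [← Finset.mul_sum]
    try ring
  have h9 : ∑ i : Fin n, ∑ j : Fin n, 12*(‖Y j‖^2*⟪Y i, Y j⟫^2)
      = 12*(n:ℝ)*(∑ j, (‖Y j‖^2)^2) := by
    rw [Finset.sum_comm]
    have e : ∀ j : Fin n, ∑ i : Fin n, 12*(‖Y j‖^2*⟪Y i, Y j⟫^2)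
        = (12*‖Y j‖^2) * ((n:ℝ)*‖Y j‖^2) := by
      intro j
      have e2 : ∑ i : Fin n, 12*(‖Y j‖^2*⟪Y i, Y j⟫^2)
          = (12*‖Y j‖^2) * ∑ i, ⟪Y i, Y j⟫^2 := by
        rw [Finset.mul_sum]
        apply Finset.sum_congr rfl; intro i _; ring
      rw [e2, ssq_eq' hcov j]
    rw [Finset.sum_congr rfl (fun j _ => e j)]
    rw [show (fun j => (12*‖Y j‖^2) * ((n:ℝ)*‖Y j‖^2)) = (fun j => (12*(n:ℝ)) * (‖Y j‖^2)^2) by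
      funext j; ring]
    rw [← Finset.mul_sum]
    try ring
  have h10 : ∑ i : Fin n, ∑ j : Fin n, 12*(⟪Y i, Y j⟫ * ‖Y i‖^2 * ‖Y j‖^2)
      = 12*(∑ i, ∑ j, ⟪Y i, Y j⟫ * ‖Y i‖^2 * ‖Y j‖^2) := by
    rw [Finset.mul_sum]
    apply Finset.sum_congr rfl; intro i _
    rw [← Finset.mul_sum]
  rw [h1, h2, h3, h4, h5, h6, h7, h8, h9, h10]; ring

end Ident2

lemma hasCubic_exp_lin (k : ℝ) : HasCubic (fun u => Real.exp (k*u)) 1 k (k^2/2) (k^3/6) := by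
  have hx : HasCubic (fun u => k*u) 0 k 0 0 :=
    (hasCubic_poly 0 k 0 0).congr (by filter_upwards with u; ring)
  exact hx.exp_comp.of_eq rfl rfl (by ring) (by ring)

set_option maxHeartbeats 2000000 in
theorem Tnbeta_limit_beta_infty (d n : ℕ) (hn : 0 < n)
    (Y : Fin n → EuclideanSpace ℝ (Fin d))
    (hmean : ∑ j, Y j = 0)
    (hcov : ∀ k l : Fin d, ∑ j, Y j k * Y j l = if k = l then (n : ℝ) else 0)
    (T : ℝ → ℝ)
    (hT : ∀ β : ℝ, T β = Real.pi ^ ((d : ℝ) / 2) *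
        ((1 / (n : ℝ)) * ∑ i, ∑ j,
            (1 / β ^ ((d : ℝ) / 2)) * Real.exp (‖Y i + Y j‖ ^ 2 / (4 * β))
          + (n : ℝ) / (β - 1) ^ ((d : ℝ) / 2)
          - 2 * ∑ j, (1 / (β - 1 / 2) ^ ((d : ℝ) / 2))
              * Real.exp (‖Y j‖ ^ 2 / (4 * β - 2)))) :
    Tendsto (fun β : ℝ => β ^ (3 + (d : ℝ) / 2) * (96 * T β) / ((n : ℝ) * Real.pi ^ ((d : ℝ) / 2)))
      atTop
      (𝓝 (2 * ((1 / (n : ℝ) ^ 2) * ∑ j, ∑ k, ⟪Y j, Y k⟫ ^ 3)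
        + 3 * ((1 / (n : ℝ) ^ 2) * ∑ j, ∑ k, ⟪Y j, Y k⟫ * ‖Y j‖ ^ 2 * ‖Y k‖ ^ 2))) := by
  have hN : (0:ℝ) < (n:ℝ) := by exact_mod_cast hn
  have hNne : (n:ℝ) ≠ 0 := ne_of_gt hN
  set p : ℝ := (d:ℝ)/2 with hp
  set RHS : ℝ := 2 * ((1 / (n : ℝ) ^ 2) * ∑ j, ∑ k, ⟪Y j, Y k⟫ ^ 3)
        + 3 * ((1 / (n : ℝ) ^ 2) * ∑ j, ∑ k, ⟪Y j, Y k⟫ * ‖Y j‖ ^ 2 * ‖Y k‖ ^ 2) with hRHS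
  -- Block 1
  have hB1inner : ∀ i : Fin n, HasCubic (fun u => ∑ j, Real.exp (‖Y i + Y j‖^2/4 * u))
      (∑ _j : Fin n, (1:ℝ)) (∑ j, ‖Y i + Y j‖^2/4) (∑ j, (‖Y i + Y j‖^2/4)^2/2)
      (∑ j, (‖Y i + Y j‖^2/4)^3/6) :=
    fun i => hasCubic_sum Finset.univ _ _ _ _ _ (fun j _ => hasCubic_exp_lin _)
  have hB1' := hasCubic_sum Finset.univ _ _ _ _ _ (fun i (_ : i ∈ Finset.univ) => hB1inner i)
  have hB1 := hB1'.const_mul (1/(n:ℝ))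
  -- Block 2
  have hB2 := (hasCubic_rpow p).const_mul (n:ℝ)
  -- Block 3
  have hhalf := (hasCubic_rpow p).scale (s := (2⁻¹:ℝ)) (by norm_num)
  have hB3j : ∀ j : Fin n, HasCubic
      (fun u => (1 - 2⁻¹*u)^(-p) * Real.exp (‖Y j‖^2 * u / (4 - 2*u)))
      _ _ _ _ :=
    fun j => hhalf.mul ((hasCubic_ratarg (‖Y j‖^2)).exp_comp)
  have hB3' := hasCubic_sum Finset.univ _ _ _ _ _ (fun j (_ : j ∈ Finset.univ) => hB3j j)
  have hB3 := hB3'.const_mul (2:ℝ)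
  have hFcub := (hB1.add hB2).sub hB3
  have hFcub2 := hFcub.of_eq (b0 := 0) (b1 := 0) (b2 := 0) (b3 := (n:ℝ) * RHS / 96)
    ?e0 ?e1 ?e2 ?e3
  case e0 =>
    simp [Finset.sum_const, Finset.card_univ]
    try field_simp
    try ring
  case e1 =>
    have k1 : ∑ i : Fin n, ∑ j : Fin n, ‖Y i + Y j‖^2/4
        = (∑ i : Fin n, ∑ j : Fin n, ‖Y i + Y j‖^2)/4 := by
      rw [Finset.sum_div]
      exact Finset.sum_congr rfl (fun i _ => by rw [Finset.sum_div])
    rw [k1, T1 hmean]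
    have k1' : ∑ i : Fin n, ((1:ℝ)*(‖Y i‖^2/4) + p*2⁻¹*1)
        = (1/4)*(∑ j, ‖Y j‖^2) + (n:ℝ)*(p/2) := by
      rw [Finset.sum_congr rfl (fun (i : Fin n) _ =>
        show (1:ℝ)*(‖Y i‖^2/4) + p*2⁻¹*1 = p/2 + (1/4)*‖Y i‖^2 from by ring)]
      rw [Finset.sum_add_distrib, ← Finset.mul_sum]
      simp [Finset.sum_const, Finset.card_univ]
      try ring
    rw [k1']
    field_simp
    ring
  case e2 =>
    have k2 : ∑ i : Fin n, ∑ j : Fin n, (‖Y i + Y j‖^2/4)^2/2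
        = (∑ i : Fin n, ∑ j : Fin n, (‖Y i + Y j‖^2)^2)/32 := by
      rw [Finset.sum_div]
      refine Finset.sum_congr rfl (fun i _ => ?_)
      rw [Finset.sum_div]
      exact Finset.sum_congr rfl (fun j _ => by ring)
    rw [k2, T2 hmean hcov]
    have k2' : ∑ i : Fin n, ((1:ℝ)*(‖Y i‖^2/8 + (‖Y i‖^2/4)^2/2) + p*2⁻¹*(‖Y i‖^2/4)
          + p*(p+1)/2*2⁻¹^2*1)
        = (n:ℝ)*(p*(p+1)/8) + (1/8 + p/8)*(∑ j, ‖Y j‖^2) + (1/32)*(∑ j, (‖Y j‖^2)^2) := by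
      rw [Finset.sum_congr rfl (fun (i : Fin n) _ =>
        show (1:ℝ)*(‖Y i‖^2/8 + (‖Y i‖^2/4)^2/2) + p*2⁻¹*(‖Y i‖^2/4) + p*(p+1)/2*2⁻¹^2*1
          = p*(p+1)/8 + (1/8 + p/8)*‖Y i‖^2 + (1/32)*(‖Y i‖^2)^2 from by ring)]
      rw [Finset.sum_add_distrib, Finset.sum_add_distrib, ← Finset.mul_sum, ← Finset.mul_sum]
      simp [Finset.sum_const, Finset.card_univ]
      try ring
    rw [k2', csum_eq d n Y hcov, hp]
    field_simp
    ring
  case e3 =>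
    have k3 : ∑ i : Fin n, ∑ j : Fin n, (‖Y i + Y j‖^2/4)^3/6
        = (∑ i : Fin n, ∑ j : Fin n, (‖Y i + Y j‖^2)^3)/384 := by
      rw [Finset.sum_div]
      refine Finset.sum_congr rfl (fun i _ => ?_)
      rw [Finset.sum_div]
      exact Finset.sum_congr rfl (fun j _ => by ring)
    rw [k3, T3 hmean hcov]
    have k3' : ∑ i : Fin n, ((1:ℝ)*(‖Y i‖^2/16 + ‖Y i‖^2/4*(‖Y i‖^2/8) + (‖Y i‖^2/4)^3/6)
          + p*2⁻¹*(‖Y i‖^2/8 + (‖Y i‖^2/4)^2/2) + p*(p+1)/2*2⁻¹^2*(‖Y i‖^2/4)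
          + p*(p+1)*(p+2)/6*2⁻¹^3*1)
        = (n:ℝ)*(p*(p+1)*(p+2)/48) + (1/16 + p/16 + p*(p+1)/32)*(∑ j, ‖Y j‖^2)
          + (1/32 + p/64)*(∑ j, (‖Y j‖^2)^2) + (1/384)*(∑ j, (‖Y j‖^2)^3) := by
      rw [Finset.sum_congr rfl (fun (i : Fin n) _ =>
        show (1:ℝ)*(‖Y i‖^2/16 + ‖Y i‖^2/4*(‖Y i‖^2/8) + (‖Y i‖^2/4)^3/6)
          + p*2⁻¹*(‖Y i‖^2/8 + (‖Y i‖^2/4)^2/2) + p*(p+1)/2*2⁻¹^2*(‖Y i‖^2/4)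
          + p*(p+1)*(p+2)/6*2⁻¹^3*1
          = p*(p+1)*(p+2)/48 + (1/16 + p/16 + p*(p+1)/32)*‖Y i‖^2
            + (1/32 + p/64)*(‖Y i‖^2)^2 + (1/384)*(‖Y i‖^2)^3 from by ring)]
      rw [Finset.sum_add_distrib, Finset.sum_add_distrib, Finset.sum_add_distrib,
        ← Finset.mul_sum, ← Finset.mul_sum, ← Finset.mul_sum]
      simp [Finset.sum_const, Finset.card_univ]
      try ring
    rw [k3', csum_eq d n Y hcov, hRHS, hp]
    field_simp
    ring
  -- conclusion
  have hdiv := hFcub2.tendsto_div_cube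
  have h1β : Tendsto (fun β : ℝ => 1/β) atTop (𝓝[>] (0:ℝ)) := by
    rw [tendsto_nhdsWithin_iff]
    constructor
    · simpa using tendsto_inv_atTop_zero
    · filter_upwards [eventually_gt_atTop (0:ℝ)] with β hβ
      simp only [Set.mem_Ioi]
      positivity
  have hcomp := hdiv.comp h1β
  have hfin := hcomp.const_mul (96/(n:ℝ))
  rw [show (96/(n:ℝ)) * ((n:ℝ) * RHS / 96) = RHS by field_simp] at hfin
  refine hfin.congr' ?_
  filter_upwards [eventually_gt_atTop (2:ℝ)] with β hβ2
  have hβ0 : (0:ℝ) < β := by linarith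
  have hβ0' : β ≠ 0 := ne_of_gt hβ0
  have hβ1 : (0:ℝ) < β - 1 := by linarith
  have hβh : (0:ℝ) < β - 1/2 := by linarith
  have hap : (0:ℝ) < β ^ p := Real.rpow_pos_of_pos hβ0 p
  have hbp : (0:ℝ) < (β - 1) ^ p := Real.rpow_pos_of_pos hβ1 p
  have hcp : (0:ℝ) < (β - 1/2) ^ p := Real.rpow_pos_of_pos hβh p
  have hPp : (0:ℝ) < Real.pi ^ p := Real.rpow_pos_of_pos Real.pi_pos p
  have hkey : ∀ x : ℝ, 0 < x → (x/β)^(-p) = β^p / x^p := by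
    intro x hx
    rw [Real.rpow_neg (by positivity), Real.div_rpow hx.le hβ0.le, inv_div]
  have r1 : ((1:ℝ) - 1/β) ^ (-p) = β^p / (β-1)^p := by
    rw [show (1:ℝ) - 1/β = (β-1)/β by field_simp]
    exact hkey _ hβ1
  have r2 : ((1:ℝ) - 2⁻¹ * (1/β)) ^ (-p) = β^p / (β-1/2)^p := by
    rw [show (1:ℝ) - 2⁻¹ * (1/β) = (β-1/2)/β by field_simp]
    exact hkey _ hβh
  have hsplit : β ^ ((3:ℝ)+p) = β^(3:ℕ) * β^p := by
    rw [show (3:ℝ)+p = ((3:ℕ):ℝ)+p by norm_num, Real.rpow_add hβ0, Real.rpow_natCast]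
  have hsum1 : ∑ i : Fin n, ∑ j : Fin n, Real.exp (‖Y i + Y j‖^2/4 * (1/β))
      = ∑ i : Fin n, ∑ j : Fin n, Real.exp (‖Y i + Y j‖^2/(4*β)) :=
    Finset.sum_congr rfl (fun i _ => Finset.sum_congr rfl (fun j _ => by
      rw [div_mul_div_comm, mul_one]))
  have hsum2 : ∑ j : Fin n, ((1:ℝ) - 2⁻¹*(1/β))^(-p) * Real.exp (‖Y j‖^2 * (1/β)/(4 - 2*(1/β)))
      = (β^p / (β-1/2)^p) * ∑ j : Fin n, Real.exp (‖Y j‖^2/(4*β - 2)) := by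
    rw [Finset.mul_sum]
    refine Finset.sum_congr rfl (fun j _ => ?_)
    have h4 : (0:ℝ) < 4 - 2*(1/β) := by
      have h5 : 1/β < 1/2 := by
        rw [div_lt_div_iff₀ hβ0 (by norm_num)]
        linarith
      linarith
    rw [r2, show ‖Y j‖^2 * (1/β)/(4 - 2*(1/β)) = ‖Y j‖^2/(4*β - 2) by
      rw [div_eq_div_iff (ne_of_gt h4) (ne_of_gt (show (0:ℝ) < 4*β - 2 by linarith))]
      field_simp
      try ring]
  simp only [Function.comp]
  rw [hT β, hsum1, hsum2, r1, hsplit]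
  have pull1 : ∑ i : Fin n, ∑ j : Fin n, 1/β^p * Real.exp (‖Y i + Y j‖^2/(4*β))
      = (1/β^p) * ∑ i : Fin n, ∑ j : Fin n, Real.exp (‖Y i + Y j‖^2/(4*β)) := by
    rw [Finset.mul_sum]
    exact Finset.sum_congr rfl (fun i _ => by rw [← Finset.mul_sum])
  have pull2 : ∑ j : Fin n, 1/(β-1/2)^p * Real.exp (‖Y j‖^2/(4*β - 2))
      = (1/(β-1/2)^p) * ∑ j : Fin n, Real.exp (‖Y j‖^2/(4*β - 2)) := by
    rw [← Finset.mul_sum]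
  rw [pull1, pull2]
  field_simp
end

section
/- For β > 2 and d ≥ 1, ∫_{R^d} C(t,t) exp(-β‖t‖²) dt = π^{d/2} [ (β-2)^{-d/2} - (β-1)^{-d/2} - (d/2)(β-1)^{-d/2-1} - (d(d+2)/8)(β-1)^{-d/2-2} ], where C(s,t) = exp((‖s‖²+‖t‖²)/2)(e^{s·t} - 1 - s·t - (s·t)²/2). -/
open MeasureTheory Real
open scoped RealInnerProductSpace

lemma aux_int1 (b : ℝ) (hb : 0 < b) (n : ℕ) :
    IntegrableOn (fun y : ℝ => y ^ n * Real.exp (-b * y ^ 2)) (Set.Ioi 0) := by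
  have h := integrableOn_rpow_mul_exp_neg_mul_sq hb
    (s := (n : ℝ)) (neg_one_lt_zero.trans_le (Nat.cast_nonneg n))
  simpa [Real.rpow_natCast] using h

lemma aux_int2 (b : ℝ) (hb : 0 < b) (n : ℕ) :
    ∫ y in Set.Ioi (0:ℝ), y ^ n * Real.exp (-b * y ^ 2)
      = b ^ (-(((n:ℝ)+1)/2)) * (1/2) * Real.Gamma (((n:ℝ)+1)/2) := by
  have h := integral_rpow_mul_exp_neg_mul_rpow (p := 2) (q := (n : ℝ)) (b := b)
    two_pos (neg_one_lt_zero.trans_le (Nat.cast_nonneg n)) hb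
  rw [show ((2:ℝ)) = ((2:ℕ):ℝ) by norm_num] at h
  simp only [Real.rpow_natCast] at h
  rw [h]; push_cast [neg_div]; ring_nf

theorem expectation_T_infty (d : ℕ) (hd : 1 ≤ d) (β : ℝ) (hβ : 2 < β)
    (C : EuclideanSpace ℝ (Fin d) → EuclideanSpace ℝ (Fin d) → ℝ)
    (hC : ∀ s t, C s t = Real.exp ((‖s‖ ^ 2 + ‖t‖ ^ 2) / 2) *
        (Real.exp ⟪s, t⟫ - 1 - ⟪s, t⟫ - ⟪s, t⟫ ^ 2 / 2)) :
    ∫ t : EuclideanSpace ℝ (Fin d), C t t * Real.exp (-β * ‖t‖ ^ 2)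
      = Real.pi ^ ((d : ℝ) / 2) *
          ((β - 2) ^ (-(d : ℝ) / 2) - (β - 1) ^ (-(d : ℝ) / 2)
            - (d / 2) * (β - 1) ^ (-(d : ℝ) / 2 - 1)
            - (d * (d + 2) / 8) * (β - 1) ^ (-(d : ℝ) / 2 - 2)) := by
  have hb2 : (0:ℝ) < β - 2 := by linarith
  have hb1 : (0:ℝ) < β - 1 := by linarith
  haveI : Nonempty (Fin d) := Fin.pos_iff_nonempty.mp hd
  haveI : Nontrivial (EuclideanSpace ℝ (Fin d)) :=
    ⟨0, EuclideanSpace.single ⟨0, hd⟩ 1, by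
      intro h
      have := congrArg (fun f => f ⟨0, hd⟩) h
      simp [EuclideanSpace.single_apply] at this⟩
  set g : ℝ → ℝ := fun y =>
    Real.exp (-(β-2) * y ^ 2) - Real.exp (-(β-1) * y ^ 2)
      - y ^ 2 * Real.exp (-(β-1) * y ^ 2)
      - (1/2) * (y ^ 4 * Real.exp (-(β-1) * y ^ 2)) with hg
  have hpt : ∀ t : EuclideanSpace ℝ (Fin d),
      C t t * Real.exp (-β * ‖t‖ ^ 2) = g ‖t‖ := by
    intro t
    rw [hC, real_inner_self_eq_norm_sq]
    have e1 : Real.exp (-(β-2) * ‖t‖^2)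
        = Real.exp (‖t‖^2) * Real.exp (‖t‖^2) * Real.exp (-β * ‖t‖^2) := by
      rw [← Real.exp_add, ← Real.exp_add]; congr 1; ring
    have e2 : Real.exp (-(β-1) * ‖t‖^2)
        = Real.exp (‖t‖^2) * Real.exp (-β * ‖t‖^2) := by
      rw [← Real.exp_add]; congr 1; ring
    have e3 : (‖t‖^2 + ‖t‖^2)/2 = ‖t‖^2 := by ring
    simp only [hg, e1, e2, e3]
    ring
  simp_rw [hpt]
  rw [MeasureTheory.integral_fun_norm_addHaar
    (volume : Measure (EuclideanSpace ℝ (Fin d))) g]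
  rw [finrank_euclideanSpace_fin]
  -- volume of unit ball
  have hΓpos : 0 < Real.Gamma ((d:ℝ)/2) :=
    Real.Gamma_pos_of_pos (by positivity)
  have hd2 : ((d:ℝ)/2) ≠ 0 := by positivity
  have hΓ1 : Real.Gamma ((d:ℝ)/2 + 1) = ((d:ℝ)/2) * Real.Gamma ((d:ℝ)/2) :=
    Real.Gamma_add_one hd2
  have hΓ2 : Real.Gamma ((d:ℝ)/2 + 2) = ((d:ℝ)/2 + 1) * (((d:ℝ)/2) * Real.Gamma ((d:ℝ)/2)) := by
    rw [show (d:ℝ)/2 + 2 = ((d:ℝ)/2 + 1) + 1 by ring, Real.Gamma_add_one (by positivity), hΓ1]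
  have hsqrt : Real.sqrt π ^ d = π ^ ((d:ℝ)/2) := by
    rw [Real.sqrt_eq_rpow, ← Real.rpow_natCast (π ^ ((1:ℝ)/2)) d,
      ← Real.rpow_mul pi_pos.le]
    congr 1; ring
  have hvol : (volume (Metric.ball (0 : EuclideanSpace ℝ (Fin d)) 1)).toReal
      = π ^ ((d:ℝ)/2) / Real.Gamma ((d:ℝ)/2 + 1) := by
    rw [EuclideanSpace.volume_ball]
    simp only [Fintype.card_fin, ENNReal.ofReal_one, one_pow, one_mul]
    rw [ENNReal.toReal_ofReal (by positivity), hsqrt]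
  rw [measureReal_def, hvol]
  -- inner integral
  have hsplit : (fun y : ℝ => y ^ (d - 1) • g y)
      = fun y : ℝ => y ^ (d-1) * Real.exp (-(β-2) * y ^ 2)
        - y ^ (d-1) * Real.exp (-(β-1) * y ^ 2)
        - y ^ (d+1) * Real.exp (-(β-1) * y ^ 2)
        - (1/2) * (y ^ (d+3) * Real.exp (-(β-1) * y ^ 2)) := by
    funext y
    have h1 : d - 1 + 2 = d + 1 := by omega
    have h3 : d - 1 + 4 = d + 3 := by omega
    simp only [hg, smul_eq_mul, ← h1, ← h3, pow_add]
    ring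
  rw [hsplit]
  have I1 := aux_int1 (β-2) hb2 (d-1)
  have I2 := aux_int1 (β-1) hb1 (d-1)
  have I3 := aux_int1 (β-1) hb1 (d+1)
  have I4 := (aux_int1 (β-1) hb1 (d+3)).const_mul (1/2 : ℝ)
  have I12 : IntegrableOn (fun y : ℝ => y ^ (d-1) * Real.exp (-(β-2)*y^2)
      - y ^ (d-1) * Real.exp (-(β-1)*y^2)) (Set.Ioi 0) := I1.sub I2
  have I123 : IntegrableOn (fun y : ℝ => y ^ (d-1) * Real.exp (-(β-2)*y^2)
      - y ^ (d-1) * Real.exp (-(β-1)*y^2)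
      - y ^ (d+1) * Real.exp (-(β-1)*y^2)) (Set.Ioi 0) := I12.sub I3
  rw [integral_sub I123 I4, integral_sub I12 I3, integral_sub I1 I2, integral_const_mul]
  rw [aux_int2 _ hb2 (d-1), aux_int2 _ hb1 (d-1), aux_int2 _ hb1 (d+1), aux_int2 _ hb1 (d+3)]
  have hc1 : ((d - 1 : ℕ) : ℝ) = (d:ℝ) - 1 := by
    rw [Nat.cast_sub hd, Nat.cast_one]
  have hc3 : ((d + 1 : ℕ) : ℝ) = (d:ℝ) + 1 := by push_cast; ring
  have hc4 : ((d + 3 : ℕ) : ℝ) = (d:ℝ) + 3 := by push_cast; ring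
  rw [hc1, hc3, hc4]
  rw [show ((d:ℝ) - 1 + 1)/2 = (d:ℝ)/2 by ring,
    show ((d:ℝ) + 1 + 1)/2 = (d:ℝ)/2 + 1 by ring,
    show ((d:ℝ) + 3 + 1)/2 = (d:ℝ)/2 + 2 by ring,
    show -((d:ℝ)/2) = -(d:ℝ)/2 by ring,
    show -((d:ℝ)/2 + 1) = -(d:ℝ)/2 - 1 by ring,
    show -((d:ℝ)/2 + 2) = -(d:ℝ)/2 - 2 by ring,
    hΓ1, hΓ2, nsmul_eq_mul, smul_eq_mul]
  have hdR : (d:ℝ) ≠ 0 := by positivity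
  field_simp
  ring
end
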